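/- For positive invertible bounded operators P, Q on a complex Hilbert space, any bounded operator X, and any real t ≤ 2, ‖P X Q⁻¹ + P⁻¹ X Q + t X‖ ≥ (t + 2)‖X‖. -/

import Mathlib

set_option synthInstance.maxHeartbeats 400000
set_option maxHeartbeats 1000000
open ContinuousLinearMap NormedSpace
variable {H : Type*} [NormedAddCommGroup H] [InnerProductSpace ℂ H] [CompleteSpace H]

lemma expReal_hasDerivAt (M : H →L[ℂ] H) (t : ℝ) :
    HasDerivAt (fun s : ℝ => exp (s • M)) (M * exp (t • M)) t :=
  hasDerivAt_exp_smul_const' (𝕂 := ℝ) M t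

lemma expReal_apply_hasDerivAt (M : H →L[ℂ] H) (w : H) (t : ℝ) :
    HasDerivAt (fun s : ℝ => exp (s • M) w) ((M * exp (t • M)) w) t :=
  ((ContinuousLinearMap.apply ℂ H w).restrictScalars ℝ).hasFDerivAt.comp_hasDerivAt t
    (expReal_hasDerivAt M t)

lemma expReal_sa (M : H →L[ℂ] H) (hM : IsSelfAdjoint M) (t : ℝ) :
    IsSelfAdjoint (exp (t • M)) := by
  rw [IsSelfAdjoint, star_exp, star_smul, hM.star_eq, star_trivial]

lemma expReal_add (M : H →L[ℂ] H) (s t : ℝ) :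
    exp ((s + t) • M) = exp (s • M) * exp (t • M) := by
  letI : NormedAlgebra ℚ (H →L[ℂ] H) := .restrictScalars ℚ ℂ _
  rw [add_smul, exp_add_of_commute ((Commute.refl M).smul_left s |>.smul_right t)]

lemma sa_inner_sq (S : H →L[ℂ] H) (hS : IsSelfAdjoint S) (u : H) :
    RCLike.re (inner ℂ u (S (S u)) : ℂ) = ‖S u‖ ^ 2 := by
  rw [isSelfAdjoint_iff'] at hS
  have h2 := ContinuousLinearMap.adjoint_inner_right S u (S u)
  rw [hS] at h2
  rw [h2]
  exact inner_self_eq_norm_sq (𝕜 := ℂ) (S u)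

section c
variable (c : H →L[ℂ] H)

lemma ccsa (hc : IsSelfAdjoint c) : IsSelfAdjoint (-(c * c)) := by
  rw [IsSelfAdjoint, star_neg, star_mul, hc.star_eq]

lemma comm_exp (t : ℝ) : c * exp (t • (-(c * c))) = exp (t • (-(c * c))) * c :=
  ((((Commute.refl c).mul_right (Commute.refl c)).neg_right.smul_right t).exp_right)

/-- `‖e^{tN} u‖² = re ⟪u, e^{tN}e^{tN} u⟫` with the double written via `(t+t)`. -/
lemma normsq_exp (hc : IsSelfAdjoint c) (u : H) (t : ℝ) :
    ‖exp (t • (-(c * c))) u‖ ^ 2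
      = RCLike.re (inner ℂ u (exp ((t + t) • (-(c * c))) u) : ℂ) := by
  rw [expReal_add]
  have hsa : IsSelfAdjoint (exp (t • (-(c * c)))) := expReal_sa _ (ccsa c hc) t
  rw [← sa_inner_sq _ hsa u]
  rfl

/-- derivative of `s ↦ ‖e^{sN}u‖²` is `-2‖e^{sN}(c u)‖²`. -/
lemma g_hasDerivAt (hc : IsSelfAdjoint c) (u : H) (t : ℝ) :
    HasDerivAt (fun s : ℝ => ‖exp (s • (-(c * c))) u‖ ^ 2)
      (-(2 * ‖exp (t • (-(c * c))) (c u)‖ ^ 2)) t := by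
  set N := -(c * c) with hN
  have heq : (fun s : ℝ => ‖exp (s • N) u‖ ^ 2)
      = fun s : ℝ => RCLike.re (inner ℂ u (exp (s • (N + N)) u) : ℂ) := by
    funext s
    rw [normsq_exp c hc u s]
    congr 2
    rw [smul_add, add_smul]
  rw [heq]
  -- vector path derivative
  have hv : HasDerivAt (fun s : ℝ => exp (s • (N + N)) u)
      (((N + N) * exp (t • (N + N))) u) t := expReal_apply_hasDerivAt (N + N) u t
  have hinner : HasDerivAt (fun s : ℝ => (inner ℂ u (exp (s • (N + N)) u) : ℂ))
      ((inner ℂ u (((N + N) * exp (t • (N + N))) u) : ℂ)) t := by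
    have := (hasDerivAt_const t u).inner ℂ hv
    simpa [inner_add_right] using this
  have hre : HasDerivAt (fun s : ℝ => RCLike.re (inner ℂ u (exp (s • (N + N)) u) : ℂ))
      (RCLike.re ((inner ℂ u (((N + N) * exp (t • (N + N))) u) : ℂ))) t := by
    exact (RCLike.reCLM.hasFDerivAt.comp_hasDerivAt t hinner)
  convert hre using 1
  -- now the value identity
  have e2 : exp (t • (N + N)) = exp (t • N) * exp (t • N) := by
    rw [← expReal_add]
    congr 1
    rw [smul_add, add_smul]
  have hS : IsSelfAdjoint (c * exp (t • N)) := by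
    have : star (c * exp (t • N)) = exp (t • N) * c := by
      rw [star_mul, (expReal_sa N (ccsa c hc) t).star_eq, hc.star_eq]
    rw [IsSelfAdjoint, this, ← comm_exp c t]
  have hprod : (c * exp (t • N)) * (c * exp (t • N)) = c * c * (exp (t • N) * exp (t • N)) := by
    rw [mul_assoc, ← mul_assoc (exp (t • N)) c, ← comm_exp c t, mul_assoc, ← mul_assoc]
  have hop : (N + N) * exp (t • (N + N))
      = -((c * exp (t • N)) * (c * exp (t • N)) + (c * exp (t • N)) * (c * exp (t • N))) := by
    rw [e2, hprod, hN]
    noncomm_ring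
  have hval : ((N + N) * exp (t • (N + N))) u
      = -((c * exp (t • N)) ((c * exp (t • N)) u) + (c * exp (t • N)) ((c * exp (t • N)) u)) := by
    rw [hop]
    rfl
  rw [hval]
  rw [inner_neg_right, inner_add_right, map_neg, map_add, sa_inner_sq _ hS u]
  have hcu : (c * exp (t • N)) u = exp (t • N) (c u) := by
    rw [comm_exp c t]; rfl
  rw [hcu]
  ring

lemma expReal_apply_continuous (M : H →L[ℂ] H) (w : H) :
    Continuous (fun s : ℝ => exp (s • M) w) :=
  continuous_iff_continuousAt.2 fun t => (expReal_apply_hasDerivAt M w t).continuousAt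

lemma g_continuous (u : H) (M : H →L[ℂ] H) :
    Continuous (fun s : ℝ => ‖exp (s • M) u‖ ^ 2) :=
  ((expReal_apply_continuous M u).norm).pow 2

lemma integral_g (hc : IsSelfAdjoint c) (u : H) (T : ℝ) :
    ∫ s in (0:ℝ)..T, ‖exp (s • (-(c * c))) (c u)‖ ^ 2
      = (‖u‖ ^ 2 - ‖exp (T • (-(c * c))) u‖ ^ 2) / 2 := by
  set N := -(c * c) with hN
  have hftc : ∫ s in (0:ℝ)..T, (-(2 * ‖exp (s • N) (c u)‖ ^ 2))
      = ‖exp (T • N) u‖ ^ 2 - ‖exp ((0:ℝ) • N) u‖ ^ 2 := by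
    refine intervalIntegral.integral_eq_sub_of_hasDerivAt (fun s _ => g_hasDerivAt c hc u s) ?_
    apply Continuous.intervalIntegrable
    have := g_continuous (c u) N
    continuity
  have h0 : exp ((0:ℝ) • N) = 1 := by rw [zero_smul, exp_zero]
  rw [h0] at hftc
  simp only [ContinuousLinearMap.one_apply] at hftc
  have hlin : ∫ s in (0:ℝ)..T, (-(2 * ‖exp (s • N) (c u)‖ ^ 2))
      = -(2 * ∫ s in (0:ℝ)..T, ‖exp (s • N) (c u)‖ ^ 2) := by
    rw [intervalIntegral.integral_neg, intervalIntegral.integral_const_mul]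
  rw [hlin] at hftc
  linarith [hftc]

lemma g_antitone (hc : IsSelfAdjoint c) (u : H) :
    Antitone (fun s : ℝ => ‖exp (s • (-(c * c))) u‖ ^ 2) := by
  have hd : ∀ s : ℝ, HasDerivAt (fun s : ℝ => ‖exp (s • (-(c * c))) u‖ ^ 2)
      (-(2 * ‖exp (s • (-(c * c))) (c u)‖ ^ 2)) s := fun s => g_hasDerivAt c hc u s
  have hdiff : Differentiable ℝ (fun s : ℝ => ‖exp (s • (-(c * c))) u‖ ^ 2) :=
    fun s => (hd s).differentiableAt
  refine antitone_of_deriv_nonpos hdiff fun s => ?_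
  rw [(hd s).deriv]
  nlinarith [sq_nonneg ‖exp (s • -(c * c)) (c u)‖]

lemma g_decay (hc : IsSelfAdjoint c) (u z : H) (hz : c z = u) (T : ℝ) (hT : 0 < T) :
    ‖exp (T • (-(c * c))) u‖ ^ 2 ≤ ‖z‖ ^ 2 / (2 * T) := by
  set N := -(c * c) with hN
  set g : ℝ → ℝ := fun s => ‖exp (s • N) u‖ ^ 2 with hg
  have hint : ∫ s in (0:ℝ)..T, g s = (‖z‖ ^ 2 - ‖exp (T • N) z‖ ^ 2) / 2 := by
    rw [hg]
    simp only [← hz]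
    exact integral_g c hc z T
  have hconst : ∫ _ in (0:ℝ)..T, g T = T * g T := by
    rw [intervalIntegral.integral_const]
    simp [smul_eq_mul]
  have hmono : ∫ _ in (0:ℝ)..T, g T ≤ ∫ s in (0:ℝ)..T, g s := by
    refine intervalIntegral.integral_mono_on hT.le (by simp) ?_ ?_
    · exact (g_continuous u N).intervalIntegrable 0 T
    · exact fun s hs => g_antitone c hc u hs.2
  have hub : (‖z‖ ^ 2 - ‖exp (T • N) z‖ ^ 2) / 2 ≤ ‖z‖ ^ 2 / 2 := by
    nlinarith [sq_nonneg ‖exp (T • N) z‖]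
  have hTg : T * g T ≤ ‖z‖ ^ 2 / 2 := by
    rw [← hconst]; rw [hint] at hmono; linarith
  have : g T ≤ ‖z‖ ^ 2 / (2 * T) := by
    rw [le_div_iff₀ (by positivity)]
    calc g T * (2 * T) = (T * g T) * 2 := by ring
    _ ≤ (‖z‖ ^ 2 / 2) * 2 := by nlinarith
    _ = ‖z‖ ^ 2 := by ring
  exact this

section agm
variable (a b X : H →L[ℂ] H)

/-- Main pointwise estimate. -/
lemma agm_inner (ha : IsSelfAdjoint a) (hb : IsSelfAdjoint b) (u v : H) :
    ‖(inner ℂ u ((a * X * b) v) : ℂ)‖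
      ≤ ‖a * a * X + X * (b * b)‖ * (‖u‖ ^ 2 + ‖v‖ ^ 2) / 4 := by
  set Y := a * a * X + X * (b * b) with hY
  set Na := -(a * a) with hNa
  set Nb := -(b * b) with hNb
  set p : ℝ → H := fun t => exp (t • Na) (a u) with hp
  set r : ℝ → H := fun t => exp (t • Nb) (b v) with hr
  set ψ : ℝ → ℂ := fun t => inner ℂ (p t) (X (r t)) with hψ
  -- ψ 0 = ⟪u, (a*X*b) v⟫
  have hψ0 : ψ 0 = inner ℂ u ((a * X * b) v) := by
    have h1 : p 0 = a u := by rw [hp]; simp [exp_zero]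
    have h2 : r 0 = b v := by rw [hr]; simp [exp_zero]
    have ha' : ContinuousLinearMap.adjoint a = a := isSelfAdjoint_iff'.mp ha
    have := ContinuousLinearMap.adjoint_inner_left a (X (b v)) u
    rw [ha'] at this
    calc ψ 0 = inner ℂ (a u) (X (b v)) := by rw [hψ]; simp only [h1, h2]
    _ = inner ℂ u (a (X (b v))) := this
    _ = inner ℂ u ((a * X * b) v) := by simp [ContinuousLinearMap.mul_apply]
  -- derivative of ψ
  have hψd : ∀ t : ℝ, HasDerivAt ψ (-(inner ℂ (p t) (Y (r t)) : ℂ)) t := by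
    intro t
    have hpd : HasDerivAt p ((Na * exp (t • Na)) (a u)) t := expReal_apply_hasDerivAt Na (a u) t
    have hqd : HasDerivAt (fun s => X (r s)) (X ((Nb * exp (t • Nb)) (b v))) t :=
      (X.restrictScalars ℝ).hasFDerivAt.comp_hasDerivAt t (expReal_apply_hasDerivAt Nb (b v) t)
    have := (hpd.inner ℂ hqd)
    refine this.congr_deriv ?_
    symm
    have hNasa : ContinuousLinearMap.adjoint Na = Na :=
      isSelfAdjoint_iff'.mp (ccsa a ha)
    have hterm2 : (inner ℂ ((Na * exp (t • Na)) (a u)) (X (r t)) : ℂ)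
        = inner ℂ (p t) ((Na * X) (r t)) := by
      have h3 : (Na * exp (t • Na)) (a u) = Na (p t) := rfl
      rw [h3]
      have := ContinuousLinearMap.adjoint_inner_left Na (X (r t)) (p t)
      rw [hNasa] at this
      rw [this]
      rfl
    have hterm1 : (inner ℂ (p t) (X ((Nb * exp (t • Nb)) (b v))) : ℂ)
        = inner ℂ (p t) ((X * Nb) (r t)) := rfl
    rw [hterm1, hterm2, ← inner_add_right]
    have hop : (X * Nb) (r t) + (Na * X) (r t) = (-Y) (r t) := by
      rw [← ContinuousLinearMap.add_apply]
      congr 1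
      rw [hNa, hNb, hY]
      noncomm_ring
    rw [hop]
    simp [inner_neg_right]
  -- continuity facts
  have hpc : Continuous p := expReal_apply_continuous Na (a u)
  have hrc : Continuous r := expReal_apply_continuous Nb (b v)
  have hψ'c : Continuous fun t => -(inner ℂ (p t) (Y (r t)) : ℂ) :=
    ((hpc.inner ((Y.continuous).comp hrc)).neg)
  -- FTC on [0, T]
  have key : ∀ T : ℝ, 0 < T →
      ‖ψ 0‖ ≤ ‖X‖ * (‖p T‖ * ‖r T‖) + ‖Y‖ * (‖u‖ ^ 2 + ‖v‖ ^ 2) / 4 := by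
    intro T hT
    have hftc : ∫ s in (0:ℝ)..T, -(inner ℂ (p s) (Y (r s)) : ℂ) = ψ T - ψ 0 :=
      intervalIntegral.integral_eq_sub_of_hasDerivAt (fun s _ => hψd s)
        (hψ'c.intervalIntegrable 0 T)
    have hbd : ∫ s in (0:ℝ)..T, ‖-(inner ℂ (p s) (Y (r s)) : ℂ)‖
        ≤ ‖Y‖ * (‖u‖ ^ 2 + ‖v‖ ^ 2) / 4 := by
      have hpt : ∀ s : ℝ, ‖-(inner ℂ (p s) (Y (r s)) : ℂ)‖
          ≤ ‖Y‖ * ((‖p s‖ ^ 2 + ‖r s‖ ^ 2) / 2) := by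
        intro s
        rw [norm_neg]
        calc ‖(inner ℂ (p s) (Y (r s)) : ℂ)‖ ≤ ‖p s‖ * ‖Y (r s)‖ := norm_inner_le_norm _ _
        _ ≤ ‖p s‖ * (‖Y‖ * ‖r s‖) := by
            have := Y.le_opNorm (r s)
            nlinarith [norm_nonneg (p s)]
        _ ≤ ‖Y‖ * ((‖p s‖ ^ 2 + ‖r s‖ ^ 2) / 2) := by nlinarith [norm_nonneg Y, sq_nonneg (‖p s‖ - ‖r s‖), norm_nonneg (p s), norm_nonneg (r s)]
      calc ∫ s in (0:ℝ)..T, ‖-(inner ℂ (p s) (Y (r s)) : ℂ)‖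
          ≤ ∫ s in (0:ℝ)..T, ‖Y‖ * ((‖p s‖ ^ 2 + ‖r s‖ ^ 2) / 2) := by
            refine intervalIntegral.integral_mono_on hT.le ?_ ?_ fun s _ => hpt s
            · exact ((hpc.inner ((Y.continuous).comp hrc)).neg.norm).intervalIntegrable 0 T
            · exact (continuous_const.mul (((hpc.norm.pow 2).add (hrc.norm.pow 2)).div_const
                2)).intervalIntegrable 0 T
      _ = ‖Y‖ / 2 * ((∫ s in (0:ℝ)..T, ‖p s‖ ^ 2) + ∫ s in (0:ℝ)..T, ‖r s‖ ^ 2) := by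
            rw [← intervalIntegral.integral_add ((g_continuous (a u) Na).intervalIntegrable 0 T)
              ((g_continuous (b v) Nb).intervalIntegrable 0 T)]
            rw [← intervalIntegral.integral_const_mul]
            congr 1
            funext s
            ring
      _ ≤ ‖Y‖ / 2 * (‖u‖ ^ 2 / 2 + ‖v‖ ^ 2 / 2) := by
            have h1 : ∫ s in (0:ℝ)..T, ‖p s‖ ^ 2 ≤ ‖u‖ ^ 2 / 2 := by
              rw [hp]
              rw [integral_g a ha u T]
              nlinarith [sq_nonneg ‖exp (T • (-(a*a))) u‖]
            have h2 : ∫ s in (0:ℝ)..T, ‖r s‖ ^ 2 ≤ ‖v‖ ^ 2 / 2 := by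
              rw [hr]
              rw [integral_g b hb v T]
              nlinarith [sq_nonneg ‖exp (T • (-(b*b))) v‖]
            nlinarith [norm_nonneg Y]
      _ = ‖Y‖ * (‖u‖ ^ 2 + ‖v‖ ^ 2) / 4 := by ring
    have hT' : ‖ψ 0‖ ≤ ‖ψ T‖ + ∫ s in (0:ℝ)..T, ‖-(inner ℂ (p s) (Y (r s)) : ℂ)‖ := by
      have h5 : ψ 0 = ψ T - ∫ s in (0:ℝ)..T, -(inner ℂ (p s) (Y (r s)) : ℂ) := by
        rw [hftc]; ring
      rw [h5]
      refine (norm_sub_le _ _).trans ?_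
      gcongr
      exact intervalIntegral.norm_integral_le_integral_norm hT.le
    have hψT : ‖ψ T‖ ≤ ‖X‖ * (‖p T‖ * ‖r T‖) := by
      calc ‖ψ T‖ ≤ ‖p T‖ * ‖X (r T)‖ := norm_inner_le_norm _ _
      _ ≤ ‖X‖ * (‖p T‖ * ‖r T‖) := by
          have := X.le_opNorm (r T)
          nlinarith [norm_nonneg (p T)]
    linarith
  -- decay of the boundary term
  have decay : ∀ T : ℝ, 0 < T →
      ‖p T‖ * ‖r T‖ ≤ (‖u‖ ^ 2 + ‖v‖ ^ 2) / (4 * T) := by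
    intro T hT
    have h1 : ‖p T‖ ^ 2 ≤ ‖u‖ ^ 2 / (2 * T) := g_decay a ha (a u) u rfl T hT
    have h2 : ‖r T‖ ^ 2 ≤ ‖v‖ ^ 2 / (2 * T) := g_decay b hb (b v) v rfl T hT
    have h3 : ‖p T‖ * ‖r T‖ ≤ (‖p T‖ ^ 2 + ‖r T‖ ^ 2) / 2 := by
      nlinarith [sq_nonneg (‖p T‖ - ‖r T‖)]
    calc ‖p T‖ * ‖r T‖ ≤ (‖u‖ ^ 2 / (2 * T) + ‖v‖ ^ 2 / (2 * T)) / 2 := by linarith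
    _ = (‖u‖ ^ 2 + ‖v‖ ^ 2) / (4 * T) := by
        rw [← add_div, div_div]
        congr 1
        ring
  -- take the limit T → ∞
  rw [← hψ0]
  have hfinal : ∀ T : ℝ, 0 < T →
      ‖ψ 0‖ ≤ ‖X‖ * ((‖u‖ ^ 2 + ‖v‖ ^ 2) / (4 * T)) + ‖Y‖ * (‖u‖ ^ 2 + ‖v‖ ^ 2) / 4 := by
    intro T hT
    have := key T hT
    have hd := decay T hT
    have hXnn := norm_nonneg X
    nlinarith
  have htend : Filter.Tendsto
      (fun T : ℝ => ‖X‖ * ((‖u‖ ^ 2 + ‖v‖ ^ 2) / (4 * T)) + ‖Y‖ * (‖u‖ ^ 2 + ‖v‖ ^ 2) / 4)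
      Filter.atTop (nhds (‖Y‖ * (‖u‖ ^ 2 + ‖v‖ ^ 2) / 4)) := by
    have h4T : Filter.Tendsto (fun T : ℝ => (4 * T)) Filter.atTop Filter.atTop :=
      Filter.Tendsto.const_mul_atTop (by norm_num) Filter.tendsto_id
    have h0 := Filter.Tendsto.div_atTop
      (tendsto_const_nhds (x := (‖u‖ ^ 2 + ‖v‖ ^ 2)) (f := Filter.atTop)) h4T
    have h0' := h0.const_mul ‖X‖
    simpa using h0'.add tendsto_const_nhds
  refine ge_of_tendsto htend ?_
  filter_upwards [Filter.eventually_gt_atTop 0] with T hT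
  exact hfinal T hT

lemma agm_inner_scaled (ha : IsSelfAdjoint a) (hb : IsSelfAdjoint b) (u v : H) :
    ‖(inner ℂ u ((a * X * b) v) : ℂ)‖
      ≤ ‖a * a * X + X * (b * b)‖ / 2 * (‖u‖ * ‖v‖) := by
  set Y := a * a * X + X * (b * b) with hY
  rcases eq_or_ne u 0 with hu | hu
  · simp [hu]
  rcases eq_or_ne v 0 with hv | hv
  · simp [hv]
  have hun : 0 < ‖u‖ := norm_pos_iff.mpr hu
  have hvn : 0 < ‖v‖ := norm_pos_iff.mpr hv
  set c : ℝ := Real.sqrt (‖v‖ / ‖u‖) with hc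
  have hcpos : 0 < c := Real.sqrt_pos.mpr (by positivity)
  have hc2 : c ^ 2 = ‖v‖ / ‖u‖ := Real.sq_sqrt (by positivity)
  have key := agm_inner a b X ha hb (c • u) (c⁻¹ • v)
  have hlhs : ‖(inner ℂ (c • u) ((a * X * b) (c⁻¹ • v)) : ℂ)‖
      = ‖(inner ℂ u ((a * X * b) v) : ℂ)‖ := by
    rw [RCLike.real_smul_eq_coe_smul (K := ℂ) c u,
      RCLike.real_smul_eq_coe_smul (K := ℂ) c⁻¹ v, map_smul,
      inner_smul_real_left, inner_smul_real_right]
    rw [smul_smul, mul_inv_cancel₀ hcpos.ne', one_smul]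
  have hnu : ‖c • u‖ ^ 2 = c ^ 2 * ‖u‖ ^ 2 := by
    rw [norm_smul, Real.norm_eq_abs, abs_of_pos hcpos]; ring
  have hnv : ‖c⁻¹ • v‖ ^ 2 = (c ^ 2)⁻¹ * ‖v‖ ^ 2 := by
    rw [norm_smul, Real.norm_eq_abs, abs_of_pos (by positivity : (0:ℝ) < c⁻¹)]
    field_simp
  rw [hlhs] at key
  refine key.trans (le_of_eq ?_)
  rw [hnu, hnv, hc2]
  field_simp
  ring

lemma agm (ha : IsSelfAdjoint a) (hb : IsSelfAdjoint b) :
    2 * ‖a * X * b‖ ≤ ‖a * a * X + X * (b * b)‖ := by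
  set Y := a * a * X + X * (b * b) with hY
  have hbound : ∀ v : H, ‖(a * X * b) v‖ ≤ ‖Y‖ / 2 * ‖v‖ := by
    intro v
    set w := (a * X * b) v with hw
    rcases eq_or_ne w 0 with h0 | h0
    · rw [h0]
      simp only [norm_zero]
      positivity
    · have h1 : ‖w‖ ^ 2 = RCLike.re (inner ℂ w ((a * X * b) v) : ℂ) := by
        rw [← hw]
        exact (inner_self_eq_norm_sq (𝕜 := ℂ) w).symm
      have h2 : RCLike.re (inner ℂ w ((a * X * b) v) : ℂ) ≤ ‖(inner ℂ w ((a * X * b) v) : ℂ)‖ :=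
        RCLike.re_le_norm _
      have h3 := agm_inner_scaled a b X ha hb w v
      have h4 : ‖w‖ ^ 2 ≤ ‖Y‖ / 2 * (‖w‖ * ‖v‖) := by
        rw [h1]; exact h2.trans h3
      have hwpos : 0 < ‖w‖ := norm_pos_iff.mpr h0
      nlinarith
  have := ContinuousLinearMap.opNorm_le_bound _ (by positivity : (0:ℝ) ≤ ‖Y‖ / 2) hbound
  linarith

end agm


section units
variable {P : (H →L[ℂ] H)ˣ}

lemma sqrt_unit_exists (hP : 0 ≤ (P : H →L[ℂ] H)) :
    ∃ p p' : H →L[ℂ] H, p * p = (P : H →L[ℂ] H) ∧ IsSelfAdjoint p ∧ IsSelfAdjoint p'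
      ∧ p * p' = 1 ∧ p' * p = 1 ∧ p' * p' = (↑P⁻¹ : H →L[ℂ] H) := by
  set p := CFC.sqrt (P : H →L[ℂ] H) with hpdef
  have hp2 : p * p = (P : H →L[ℂ] H) := CFC.sqrt_mul_sqrt_self _ hP
  have hpsa : IsSelfAdjoint p := IsSelfAdjoint.of_nonneg (CFC.sqrt_nonneg _)
  have hcommP : Commute p (P : H →L[ℂ] H) := by
    rw [← hp2]; exact (Commute.refl p).mul_right (Commute.refl p)
  have hcommP' : Commute p (↑P⁻¹ : H →L[ℂ] H) := hcommP.units_inv_right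
  set p' := p * (↑P⁻¹ : H →L[ℂ] H) with hp'def
  have h1 : p * p' = 1 := by
    rw [hp'def, ← mul_assoc, hp2, P.mul_inv]
  have h2 : p' * p = 1 := by
    rw [hp'def, mul_assoc, ← hcommP'.eq, ← mul_assoc, hp2, P.mul_inv]
  have h3 : p' * p' = (↑P⁻¹ : H →L[ℂ] H) := by
    have : (P : H →L[ℂ] H) * (p' * p') = 1 := by
      rw [← hp2, mul_assoc, ← mul_assoc p p' p', h1, one_mul, h1]
    calc p' * p' = ((↑P⁻¹ : H →L[ℂ] H) * ↑P) * (p' * p') := by rw [P.inv_mul, one_mul]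
    _ = (↑P⁻¹ : H →L[ℂ] H) * ((P : H →L[ℂ] H) * (p' * p')) := by rw [mul_assoc]
    _ = (↑P⁻¹ : H →L[ℂ] H) := by rw [this, mul_one]
  have hp'sa : IsSelfAdjoint p' := by
    have hs1 : star p' * p = 1 := by
      have := congrArg star h1
      rwa [star_mul, hpsa.star_eq, star_one] at this
    have hs2 : p * star p' = 1 := by
      have := congrArg star h2
      rwa [star_mul, hpsa.star_eq, star_one] at this
    calc star p' = star p' * (p * p') := by rw [h1, mul_one]
    _ = (star p' * p) * p' := by rw [mul_assoc]
    _ = p' := by rw [hs1, one_mul]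
  exact ⟨p, p', hp2, hpsa, hp'sa, h1, h2, h3⟩

end units

theorem stmt4 (P Q : (H →L[ℂ] H)ˣ) (hP : 0 ≤ (P : H →L[ℂ] H)) (hQ : 0 ≤ (Q : H →L[ℂ] H))
    (X : H →L[ℂ] H) (t : ℝ) (ht : t ≤ 2) :
    (t + 2) * ‖X‖ ≤ ‖(P : H →L[ℂ] H) * X * (↑Q⁻¹ : H →L[ℂ] H) +
        (↑P⁻¹ : H →L[ℂ] H) * X * (Q : H →L[ℂ] H) + t • X‖ := by
  obtain ⟨p, p', hp2, hpsa, hp'sa, hpp', hp'p, hp'2⟩ := sqrt_unit_exists hP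
  obtain ⟨q, q', hq2, hqsa, hq'sa, hqq', hq'q, hq'2⟩ := sqrt_unit_exists hQ
  set A : H →L[ℂ] H := (P : H →L[ℂ] H)
  set A' : H →L[ℂ] H := (↑P⁻¹ : H →L[ℂ] H)
  set B : H →L[ℂ] H := (Q : H →L[ℂ] H)
  set B' : H →L[ℂ] H := (↑Q⁻¹ : H →L[ℂ] H)
  have hAA' : A * A' = 1 := P.mul_inv
  have hA'A : A' * A = 1 := P.inv_mul
  have hBB' : B * B' = 1 := Q.mul_inv
  have hB'B : B' * B = 1 := Q.inv_mul
  set W : H →L[ℂ] H := A * X + X * B with hW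
  set Z : H →L[ℂ] H := p' * X * q' with hZ
  -- cancellation helpers
  have hpc1 : ∀ x : H →L[ℂ] H, p * (p' * x) = x := fun x => by
    rw [← mul_assoc, hpp', one_mul]
  have hpc2 : ∀ x : H →L[ℂ] H, p' * (p * x) = x := fun x => by
    rw [← mul_assoc, hp'p, one_mul]
  have hqd1 : ∀ x : H →L[ℂ] H, q * (q' * x) = x := fun x => by
    rw [← mul_assoc, hqq', one_mul]
  have hqd2 : ∀ x : H →L[ℂ] H, q' * (q * x) = x := fun x => by
    rw [← mul_assoc, hq'q, one_mul]
  have hac1 : ∀ x : H →L[ℂ] H, A' * (A * x) = x := fun x => by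
    rw [← mul_assoc, hA'A, one_mul]
  -- identity 1
  have id1 : A' * W + W * B' = A * X * B' + A' * X * B + (X + X) := by
    simp only [hW, mul_add, add_mul, mul_assoc, hac1, hBB', mul_one]
    abel
  -- identity 2
  have id2 : p' * W * q' = A * Z + Z * B := by
    simp only [hW, hZ, ← hp2, ← hq2, mul_add, add_mul, mul_assoc, hpc1, hpc2,
      hqd1, hqd2, hpp', hp'p, hqq', hq'q, mul_one, one_mul]
  -- identity 3
  have id3 : p * Z * q = X := by
    simp only [hZ, ← hp2, ← hq2, mul_assoc, hpc1, hpc2, hqd1, hqd2, hpp', hp'p,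
      hqq', hq'q, mul_one, one_mul]
  -- apply agm twice
  have hag1 : 2 * ‖p' * W * q'‖ ≤ ‖A' * W + W * B'‖ := by
    have := agm p' q' W hp'sa hq'sa
    rwa [hp'2, hq'2] at this
  have hag2 : 2 * ‖p * Z * q‖ ≤ ‖A * Z + Z * B‖ := by
    have := agm p q Z hpsa hqsa
    rwa [hp2, hq2] at this
  rw [id3] at hag2
  rw [id2] at hag1
  have h4 : 4 * ‖X‖ ≤ ‖A' * W + W * B'‖ := by linarith
  rw [id1] at h4
  -- reduce general t to t = 2
  have hsplit : A * X * B' + A' * X * B + t • X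
      = (A * X * B' + A' * X * B + (X + X)) - (2 - t) • X := by
    have h2t : (2 - t) • X = X + X - t • X := by
      rw [sub_smul, two_smul]
    rw [h2t]
    abel
  have hnorm := norm_sub_norm_le (A * X * B' + A' * X * B + (X + X)) ((2 - t) • X)
  rw [← hsplit] at hnorm
  have hsm : ‖(2 - t) • X‖ = (2 - t) * ‖X‖ := by
    rw [norm_smul, Real.norm_eq_abs, abs_of_nonneg (by linarith)]
  have hXnn := norm_nonneg X
  rw [hsm] at hnorm
  linarith
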